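/- (Marginal density, case a = 3/2, b = 1/2, φ = 1.) For every real β ≠ 0, ∫₀¹ normalPDF(0, 1/ρ − 1)(β) · f(ρ; 3/2, 1/2, 1) dρ = (√2/π^(3/2)) · {1 − (1/2) e^(β²/2) β² Γ(0, β²/2)}, where Γ(0, z) = ∫_z^∞ t^(−1) e^(−t) dt is the upper incomplete gamma function at shape 0. -/

import Mathlib

open MeasureTheory Real

/-- The three-parameter beta (TPB) density with parameters `a`, `b`, `φ`. -/
noncomputable def tpb (a b φ x : ℝ) : ℝ :=
  (Real.Gamma (a + b) / (Real.Gamma a * Real.Gamma b)) * φ ^ b * x ^ (b - 1) *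
    (1 - x) ^ (a - 1) * (1 + (φ - 1) * x) ^ (-(a + b))

/-- The centered normal density with variance `v`. -/
noncomputable def normalPDF (v θ : ℝ) : ℝ :=
  (2 * Real.pi * v) ^ (-(1 : ℝ) / 2) * Real.exp (-θ ^ 2 / (2 * v))

/-- The upper incomplete gamma function Γ(s, z) = ∫_z^∞ t^(s−1) e^(−t) dt. -/
noncomputable def upperGamma (s z : ℝ) : ℝ := ∫ t in Set.Ioi z, t ^ (s - 1) * Real.exp (-t)

open Set Filter

lemma ug_int {z : ℝ} (hz : 0 < z) :
    IntegrableOn (fun t : ℝ => t ^ ((0:ℝ) - 1) * Real.exp (-t)) (Set.Ioi z) := by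
  have hmeas : AEStronglyMeasurable (fun t : ℝ => t ^ ((0:ℝ) - 1) * Real.exp (-t))
      (volume.restrict (Set.Ioi z)) := by
    apply ContinuousOn.aestronglyMeasurable _ measurableSet_Ioi
    intro t ht
    exact ((Real.continuousAt_rpow_const t _ (Or.inl (hz.trans ht).ne')).mul
      (Real.continuous_exp.continuousAt.comp (continuousAt_neg))).continuousWithinAt
  refine Integrable.mono' ((exp_neg_integrableOn_Ioi z one_pos).const_mul z⁻¹) hmeas ?_
  · filter_upwards [ae_restrict_mem measurableSet_Ioi] with t ht
    have htpos : 0 < t := hz.trans ht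
    rw [norm_mul, Real.norm_eq_abs, Real.norm_eq_abs, abs_of_pos (Real.rpow_pos_of_pos htpos _),
      abs_of_pos (Real.exp_pos _)]
    have : t ^ ((0:ℝ)-1) ≤ z⁻¹ := by
      rw [show ((0:ℝ)-1) = -1 by ring, Real.rpow_neg_one]
      exact inv_anti₀ hz (le_of_lt ht)
    calc t ^ ((0:ℝ)-1) * Real.exp (-t) ≤ z⁻¹ * Real.exp (-t) := by
          exact mul_le_mul_of_nonneg_right this (Real.exp_pos _).le
      _ = z⁻¹ * Real.exp (-1 * t) := by ring_nf

lemma ug_nonneg {z : ℝ} (hz : 0 < z) : 0 ≤ upperGamma 0 z := by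
  apply setIntegral_nonneg measurableSet_Ioi
  intro t ht
  exact mul_nonneg (Real.rpow_nonneg (hz.trans ht).le _) (Real.exp_pos _).le

lemma ug_le {z : ℝ} (hz : 0 < z) : upperGamma 0 z ≤ z⁻¹ * Real.exp (-z) := by
  have h1 : upperGamma 0 z ≤ ∫ t in Set.Ioi z, z⁻¹ * Real.exp (-t) := by
    apply setIntegral_mono_on (ug_int hz)
      ((exp_neg_integrableOn_Ioi z one_pos).const_mul z⁻¹ |>.congr
        (by filter_upwards with t; ring_nf)) measurableSet_Ioi
    intro t ht
    have : t ^ ((0:ℝ)-1) ≤ z⁻¹ := by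
      rw [show ((0:ℝ)-1) = -1 by ring, Real.rpow_neg_one]
      exact inv_anti₀ hz (le_of_lt ht)
    exact mul_le_mul_of_nonneg_right this (Real.exp_pos _).le
  rw [MeasureTheory.integral_const_mul, integral_exp_neg_Ioi] at h1
  exact h1

lemma ug_tendsto : Tendsto (upperGamma 0) atTop (nhds 0) := by
  apply tendsto_of_tendsto_of_tendsto_of_le_of_le' (g := fun _ => (0:ℝ))
    (h := fun z => z⁻¹ * Real.exp (-z)) tendsto_const_nhds
  · have : Tendsto (fun z : ℝ => z⁻¹ * Real.exp (-z)) atTop (nhds (0 * 0)) := by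
      exact (tendsto_inv_atTop_zero).mul (Real.tendsto_exp_neg_atTop_nhds_zero)
    simpa using this
  · filter_upwards [eventually_gt_atTop 0] with z hz using ug_nonneg hz
  · filter_upwards [eventually_gt_atTop 0] with z hz using ug_le hz

lemma ug_cont : ContinuousOn (fun t : ℝ => t ^ ((0:ℝ) - 1) * Real.exp (-t)) (Set.Ioi 0) := by
  intro t ht
  exact ((Real.continuousAt_rpow_const t _ (Or.inl (ne_of_gt ht))).mul
    (Real.continuous_exp.continuousAt.comp continuousAt_neg)).continuousWithinAt

lemma ug_eq {p w : ℝ} (hp : 0 < p) (hw : p ≤ w) :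
    upperGamma 0 w = upperGamma 0 p - ∫ t in p..w, t ^ ((0:ℝ) - 1) * Real.exp (-t) := by
  have hsplit : (Set.Ioi p) = Set.Ioc p w ∪ Set.Ioi w := (Set.Ioc_union_Ioi_eq_Ioi hw).symm
  have h2 : upperGamma 0 p =
      (∫ t in Set.Ioc p w, t ^ ((0:ℝ) - 1) * Real.exp (-t)) + upperGamma 0 w := by
    rw [upperGamma, upperGamma, hsplit]
    rw [setIntegral_union (Set.Ioc_disjoint_Ioi le_rfl) measurableSet_Ioi
      ((ug_int hp).mono_set (hsplit ▸ Set.subset_union_left))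
      ((ug_int hp).mono_set (hsplit ▸ Set.subset_union_right))]
  rw [intervalIntegral.integral_of_le hw]; linarith [h2]

lemma ug_hasDeriv {z : ℝ} (hz : 0 < z) :
    HasDerivAt (upperGamma 0) (-(z ^ ((0:ℝ) - 1) * Real.exp (-z))) z := by
  set p := z / 2 with hp
  have hp0 : 0 < p := by positivity
  have hpz : p < z := by rw [hp]; linarith
  have hder : HasDerivAt (fun w => upperGamma 0 p - ∫ t in p..w, t ^ ((0:ℝ)-1) * Real.exp (-t))
      (-(z ^ ((0:ℝ) - 1) * Real.exp (-z))) z := by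
    have h1 : HasDerivAt (fun w => ∫ t in p..w, t ^ ((0:ℝ)-1) * Real.exp (-t))
        (z ^ ((0:ℝ) - 1) * Real.exp (-z)) z := by
      apply intervalIntegral.integral_hasDerivAt_right
      · apply ContinuousOn.intervalIntegrable
        apply ug_cont.mono
        intro t ht
        rw [Set.uIcc_of_le hpz.le] at ht
        exact Set.mem_Ioi.2 (lt_of_lt_of_le hp0 ht.1)
      · exact (ug_cont.stronglyMeasurableAtFilter isOpen_Ioi) z hz
      · exact (Real.continuousAt_rpow_const z _ (Or.inl hz.ne')).mul
          (Real.continuous_exp.continuousAt.comp continuousAt_neg)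
    simpa using (h1.const_sub (upperGamma 0 p))
  apply hder.congr_of_eventuallyEq
  filter_upwards [IsOpen.mem_nhds isOpen_Ioi (Set.mem_Ioi.2 hpz)] with w hw
  exact ug_eq hp0 (le_of_lt hw)

lemma key_deriv {c : ℝ} (hc : 0 < c) {ρ : ℝ} (hρ1 : ρ < 1) :
    HasDerivAt (fun ρ => -(1-ρ) * Real.exp (-(c*ρ/(1-ρ))) +
        c * Real.exp c * upperGamma 0 (c/(1-ρ)))
      (Real.exp (-(c*ρ/(1-ρ)))) ρ := by
  have hu : (0:ℝ) < 1 - ρ := by linarith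
  have hune : (1:ℝ) - ρ ≠ 0 := hu.ne'
  have hz : 0 < c / (1-ρ) := div_pos hc hu
  have hd1ρ : HasDerivAt (fun ρ : ℝ => 1 - ρ) (-1) ρ := by
    simpa using (hasDerivAt_id ρ).const_sub 1
  have h1 : HasDerivAt (fun ρ => c*ρ/(1-ρ)) (c/(1-ρ)^2) ρ := by
    have := (((hasDerivAt_id ρ).const_mul c).div hd1ρ hune)
    refine this.congr_deriv ?_
    field_simp
    simp only [id_eq]; ring
  have h2 : HasDerivAt (fun ρ => Real.exp (-(c*ρ/(1-ρ))))
      (Real.exp (-(c*ρ/(1-ρ))) * -(c/(1-ρ)^2)) ρ := h1.neg.exp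
  have h3 : HasDerivAt (fun ρ => -(1-ρ) * Real.exp (-(c*ρ/(1-ρ))))
      (1 * Real.exp (-(c*ρ/(1-ρ))) + -(1-ρ) * (Real.exp (-(c*ρ/(1-ρ))) * -(c/(1-ρ)^2))) ρ := by
    exact (hd1ρ.neg.congr_deriv (by norm_num)).mul h2
  have h4 : HasDerivAt (fun ρ => c/(1-ρ)) (c/(1-ρ)^2) ρ := by
    have := (hasDerivAt_const ρ c).div hd1ρ hune
    refine this.congr_deriv ?_
    field_simp
    ring
  have h5 : HasDerivAt (fun ρ => upperGamma 0 (c/(1-ρ)))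
      ((-((c/(1-ρ)) ^ ((0:ℝ)-1) * Real.exp (-(c/(1-ρ))))) * (c/(1-ρ)^2)) ρ :=
    HasDerivAt.comp (h₂ := upperGamma 0) ρ (ug_hasDeriv hz) h4
  have hAz : Real.exp c * Real.exp (-(c/(1-ρ))) = Real.exp (-(c*ρ/(1-ρ))) := by
    rw [← Real.exp_add]
    congr 1
    field_simp
    ring
  have := h3.add (h5.const_mul (c * Real.exp c))
  refine this.congr_deriv ?_
  rw [show ((0:ℝ)-1) = -1 by ring, Real.rpow_neg_one]
  have expand : c * Real.exp c * (-((c / (1 - ρ))⁻¹ * Real.exp (-(c / (1 - ρ)))) * (c / (1 - ρ) ^ 2))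
      = -(c / (1-ρ)) * (Real.exp c * Real.exp (-(c/(1-ρ)))) := by
    field_simp
  rw [expand, hAz]
  field_simp
  ring

lemma key {c : ℝ} (hc : 0 < c) :
    ∫ ρ in Set.Ioo (0:ℝ) 1, Real.exp (-(c * ρ / (1 - ρ))) =
      1 - c * Real.exp c * upperGamma 0 c := by
  set G : ℝ → ℝ := fun ρ => -(1-ρ) * Real.exp (-(c*ρ/(1-ρ))) +
      c * Real.exp c * upperGamma 0 (c/(1-ρ)) with hG
  have hint : IntervalIntegrable (fun ρ => Real.exp (-(c * ρ / (1 - ρ)))) volume 0 1 := by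
    rw [intervalIntegrable_iff_integrableOn_Ioc_of_le zero_le_one]
    apply Integrable.mono' (integrableOn_const (C := (1:ℝ)) measure_Ioc_lt_top.ne)
    · apply (Measurable.aestronglyMeasurable ?_).restrict
      exact (((measurable_const.mul measurable_id).div
        (measurable_const.sub measurable_id)).neg).exp
    · filter_upwards [ae_restrict_mem measurableSet_Ioc] with ρ hρ
      rw [Real.norm_eq_abs, abs_of_pos (Real.exp_pos _)]
      rw [Real.exp_le_one_iff]
      exact neg_nonpos.2 (div_nonneg (mul_nonneg hc.le hρ.1.le) (by linarith [hρ.2]))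
  have ha : Filter.Tendsto G (nhdsWithin 0 (Set.Ioi 0))
      (nhds (-1 + c * Real.exp c * upperGamma 0 c)) := by
    have hcont := (key_deriv hc (show (0:ℝ) < 1 by norm_num)).continuousAt
    have : G 0 = -1 + c * Real.exp c * upperGamma 0 c := by
      simp [hG]
    rw [← this]
    exact hcont.continuousWithinAt
  have hb : Filter.Tendsto G (nhdsWithin 1 (Set.Iio 1)) (nhds 0) := by
    have hzt : Filter.Tendsto (fun ρ : ℝ => c/(1-ρ)) (nhdsWithin 1 (Set.Iio 1)) Filter.atTop := by
      have h1 : Filter.Tendsto (fun ρ : ℝ => 1 - ρ) (nhdsWithin 1 (Set.Iio 1))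
          (nhdsWithin 0 (Set.Ioi 0)) := by
        apply tendsto_nhdsWithin_of_tendsto_nhds_of_eventually_within
        · have : Filter.Tendsto (fun ρ : ℝ => 1 - ρ) (nhds 1) (nhds (1 - 1)) :=
            (continuous_const.sub continuous_id).tendsto 1
          simpa using this.mono_left nhdsWithin_le_nhds
        · filter_upwards [self_mem_nhdsWithin] with ρ hρ
          exact Set.mem_Ioi.2 (by linarith [Set.mem_Iio.1 hρ])
      have h2 := tendsto_inv_nhdsGT_zero.comp h1
      simpa [div_eq_mul_inv] using h2.const_mul_atTop hc
    have hterm2 : Filter.Tendsto (fun ρ : ℝ => c * Real.exp c * upperGamma 0 (c/(1-ρ)))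
        (nhdsWithin 1 (Set.Iio 1)) (nhds 0) := by
      have := (ug_tendsto.comp hzt).const_mul (c * Real.exp c)
      simpa using this
    have hterm1 : Filter.Tendsto (fun ρ : ℝ => -(1-ρ) * Real.exp (-(c*ρ/(1-ρ))))
        (nhdsWithin 1 (Set.Iio 1)) (nhds 0) := by
      apply tendsto_of_tendsto_of_tendsto_of_le_of_le' (g := fun ρ : ℝ => -(1-ρ))
        (h := fun _ : ℝ => (0:ℝ))
      · have : Filter.Tendsto (fun ρ : ℝ => -(1-ρ)) (nhds 1) (nhds (-(1-1))) :=
          ((continuous_const.sub continuous_id).neg).tendsto 1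
        simpa using this.mono_left nhdsWithin_le_nhds
      · exact tendsto_const_nhds
      · filter_upwards [Ioo_mem_nhdsLT_of_mem (Set.mem_Ioc.2 ⟨zero_lt_one, le_rfl⟩)]
          with ρ hρ
        have h1 : 0 < 1 - ρ := by linarith [hρ.2]
        have : Real.exp (-(c*ρ/(1-ρ))) ≤ 1 := by
          rw [Real.exp_le_one_iff]
          exact neg_nonpos.2 (div_nonneg (mul_nonneg hc.le hρ.1.le) h1.le)
        nlinarith [Real.exp_pos (-(c*ρ/(1-ρ)))]
      · filter_upwards [Ioo_mem_nhdsLT_of_mem (Set.mem_Ioc.2 ⟨zero_lt_one, le_rfl⟩)]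
          with ρ hρ
        have h1 : 0 < 1 - ρ := by linarith [hρ.2]
        nlinarith [Real.exp_pos (-(c*ρ/(1-ρ)))]
    have h := hterm1.add hterm2
    rw [show (0:ℝ) + 0 = 0 by ring] at h
    exact h
  have hmain := intervalIntegral.integral_eq_sub_of_hasDerivAt_of_tendsto zero_lt_one
    (f := G) (fun ρ hρ => key_deriv hc hρ.2) hint ha hb
  rw [intervalIntegral.integral_of_le zero_le_one] at hmain
  rw [← MeasureTheory.integral_Ioc_eq_integral_Ioo, hmain]
  ring

lemma pointwise {β ρ : ℝ} (hρ0 : 0 < ρ) (hρ1 : ρ < 1) :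
    normalPDF (1/ρ - 1) β * tpb (3/2) (1/2) 1 ρ =
      Real.sqrt 2 / Real.pi ^ ((3:ℝ)/2) * Real.exp (-(β^2/2 * ρ/(1-ρ))) := by
  have h1ρ : (0:ℝ) < 1 - ρ := by linarith
  have hv : 1/ρ - 1 = (1-ρ)/ρ := by field_simp
  have hπ := Real.pi_pos
  have hhalfn : ∀ x : ℝ, 0 ≤ x → x ^ (-(1:ℝ)/2) = (Real.sqrt x)⁻¹ := by
    intro x hx
    rw [show (-(1:ℝ)/2) = -(1/2) by norm_num, Real.rpow_neg hx, ← Real.sqrt_eq_rpow]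
  have hhalf : ∀ x : ℝ, x ^ ((1:ℝ)/2) = Real.sqrt x := by
    intro x
    rw [← Real.sqrt_eq_rpow]
  have hG2 : Real.Gamma ((3:ℝ)/2 + 1/2) = 1 := by
    norm_num
  have hG32 : Real.Gamma ((3:ℝ)/2) = 1/2 * Real.sqrt Real.pi := by
    rw [show (3:ℝ)/2 = 1/2 + 1 by norm_num, Real.Gamma_add_one (by norm_num),
      Real.Gamma_one_half_eq]
  have hexp : -β^2/(2*(1/ρ - 1)) = -(β^2/2 * ρ/(1-ρ)) := by
    rw [hv]
    field_simp
  have hsπ : (0:ℝ) < Real.sqrt Real.pi := Real.sqrt_pos.2 hπ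
  have hs2 : (0:ℝ) < Real.sqrt 2 := Real.sqrt_pos.2 (by norm_num)
  have hsρ : (0:ℝ) < Real.sqrt ρ := Real.sqrt_pos.2 hρ0
  have hs1ρ : (0:ℝ) < Real.sqrt (1-ρ) := Real.sqrt_pos.2 h1ρ
  have h22 : Real.sqrt 2 * Real.sqrt 2 = 2 := Real.mul_self_sqrt (by norm_num)
  have hππ : Real.sqrt Real.pi * Real.sqrt Real.pi = Real.pi := Real.mul_self_sqrt hπ.le
  have hρρ : Real.sqrt ρ * Real.sqrt ρ = ρ := Real.mul_self_sqrt hρ0.le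
  have h1ρ1ρ : Real.sqrt (1-ρ) * Real.sqrt (1-ρ) = 1-ρ := Real.mul_self_sqrt h1ρ.le
  have hsv : Real.sqrt (2 * Real.pi * (1/ρ - 1)) =
      Real.sqrt 2 * Real.sqrt Real.pi * Real.sqrt (1-ρ) / Real.sqrt ρ := by
    rw [hv, show 2 * Real.pi * ((1-ρ)/ρ) = 2 * Real.pi * (1-ρ) / ρ by ring,
      Real.sqrt_div (by positivity) ρ, Real.sqrt_mul (by positivity),
      Real.sqrt_mul (by norm_num)]
  have hπ32 : Real.pi ^ ((3:ℝ)/2) = Real.pi * Real.sqrt Real.pi := by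
    rw [show ((3:ℝ)/2) = 1 + 1/2 by norm_num, Real.rpow_add hπ, Real.rpow_one,
      ← Real.sqrt_eq_rpow]
  simp only [normalPDF, tpb]
  rw [hG2, hG32, Real.Gamma_one_half_eq, Real.one_rpow,
    show (1:ℝ) + (1-1)*ρ = 1 by ring, Real.one_rpow, hexp,
    show ((1:ℝ)/2 - 1) = -(1:ℝ)/2 by norm_num, show ((3:ℝ)/2 - 1) = (1:ℝ)/2 by norm_num,
    hhalfn _ (by rw [hv]; positivity), hhalfn _ hρ0.le, hhalf, hsv, hπ32]
  field_simp
  ring_nf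
  rw [Real.sq_sqrt (by norm_num : (0:ℝ) ≤ 2)]
  rw [Real.sq_sqrt hπ.le]; ring

/-- Marginal density, case a = 3/2, b = 1/2, φ = 1. -/
theorem marginal_density_a_three_halves (β : ℝ) (hβ : β ≠ 0) :
    ∫ ρ in Set.Ioo (0 : ℝ) 1, normalPDF (1 / ρ - 1) β * tpb (3 / 2) (1 / 2) 1 ρ =
      (Real.sqrt 2 / Real.pi ^ ((3 : ℝ) / 2)) *
        (1 - (1 / 2) * Real.exp (β ^ 2 / 2) * β ^ 2 * upperGamma 0 (β ^ 2 / 2)) := by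
  have hc : 0 < β ^ 2 / 2 := by positivity
  have h1 : ∫ ρ in Set.Ioo (0 : ℝ) 1, normalPDF (1 / ρ - 1) β * tpb (3 / 2) (1 / 2) 1 ρ =
      ∫ ρ in Set.Ioo (0 : ℝ) 1,
        Real.sqrt 2 / Real.pi ^ ((3:ℝ)/2) * Real.exp (-(β^2/2 * ρ/(1-ρ))) := by
    apply setIntegral_congr_fun measurableSet_Ioo
    intro ρ hρ
    exact pointwise hρ.1 hρ.2
  rw [h1, MeasureTheory.integral_const_mul, key hc]
  ring
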